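/- Under the same hypotheses, after k Richardson steps x^{(k)} = G^k x with x = Σ_j α_j φ_j and α_ℓ ≠ 0, for each j ≥ ℓ+1 one has |⟨x^{(k)}, φ_j⟩| / |⟨x^{(k)}, φ_ℓ⟩| ≤ ρ^k · |α_j|/|α_ℓ| with ρ = (λ_n−λ_{ℓ+1})/(λ_n+λ_{ℓ+1}−2λ_ℓ). In particular if λ_ℓ < λ_{ℓ+1} the undesired components decay geometrically relative to the ℓ-th component. -/

import Mathlib

open Matrix Finset

theorem richardson_k_steps_geometric_decay
    (n : ℕ) (A : Matrix (Fin (n + 1)) (Fin (n + 1)) ℝ) (hA : A.IsSymm)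
    (φ : Fin (n + 1) → (Fin (n + 1) → ℝ)) (lam : Fin (n + 1) → ℝ)
    (hortho : ∀ i j, φ i ⬝ᵥ φ j = if i = j then (1 : ℝ) else 0)
    (heig : ∀ j, A.mulVec (φ j) = lam j • φ j)
    (hmono : Monotone lam)
    (ℓ : Fin (n + 1)) (hℓ : (ℓ : ℕ) + 1 ≤ n)
    (hgap : lam ℓ < lam ⟨(ℓ : ℕ) + 1, by omega⟩)
    (θ τ : ℝ) (hθ : 0 < θ)
    (hτ : τ = (lam ⟨(ℓ : ℕ) + 1, by omega⟩ + lam (Fin.last n)) / 2 - 1 / θ - 1)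
    (G : Matrix (Fin (n + 1)) (Fin (n + 1)) ℝ)
    (hG : G = (1 + θ * (1 + τ)) • (1 : Matrix (Fin (n + 1)) (Fin (n + 1)) ℝ) - θ • A)
    (ρ : ℝ)
    (hρ : ρ = (lam (Fin.last n) - lam ⟨(ℓ : ℕ) + 1, by omega⟩) /
        (lam (Fin.last n) + lam ⟨(ℓ : ℕ) + 1, by omega⟩ - 2 * lam ℓ))
    (α : Fin (n + 1) → ℝ) (x : Fin (n + 1) → ℝ)
    (hx : x = ∑ j, α j • φ j) (hα : α ℓ ≠ 0)
    (j : Fin (n + 1)) (hj : (ℓ : ℕ) + 1 ≤ (j : ℕ)) (k : ℕ) :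
    |(G ^ k).mulVec x ⬝ᵥ φ j| / |(G ^ k).mulVec x ⬝ᵥ φ ℓ| ≤ ρ ^ k * (|α j| / |α ℓ|) := by
  set l1 := lam ⟨(ℓ : ℕ) + 1, by omega⟩ with hl1
  set ln := lam (Fin.last n) with hln
  set μ : Fin (n + 1) → ℝ := fun i => 1 + θ * (1 + τ) - θ * lam i with hμ
  -- G acts on eigenvectors
  have hGφ : ∀ i, G.mulVec (φ i) = μ i • φ i := by
    intro i
    rw [hG, Matrix.sub_mulVec, Matrix.smul_mulVec, Matrix.smul_mulVec,
      Matrix.one_mulVec, heig]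
    funext t
    simp only [hμ, Pi.sub_apply, Pi.smul_apply, smul_eq_mul, smul_smul]
    ring
  have hGkφ : ∀ i, (G ^ k).mulVec (φ i) = (μ i) ^ k • φ i := by
    intro i
    induction k with
    | zero => simp
    | succ m ih =>
      rw [pow_succ, ← Matrix.mulVec_mulVec, hGφ, Matrix.mulVec_smul, ih, smul_smul,
        pow_succ]
      ring_nf
  have hdot : ∀ i, (G ^ k).mulVec x ⬝ᵥ φ i = α i * (μ i) ^ k := by
    intro i
    have hsum := map_sum ((G ^ k).mulVecLin) (fun i => α i • φ i) Finset.univ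
    simp only [Matrix.mulVecLin_apply] at hsum
    have hterm : ∀ p, (G ^ k).mulVec (α p • φ p) = (α p * (μ p) ^ k) • φ p := by
      intro p
      rw [Matrix.mulVec_smul, hGkφ, smul_smul]
    have hbil : (∑ p, (α p * (μ p) ^ k) • φ p) ⬝ᵥ φ i
        = ∑ p, (α p * (μ p) ^ k) * (φ p ⬝ᵥ φ i) := by
      simp only [dotProduct, Finset.sum_apply, Pi.smul_apply, smul_eq_mul,
        Finset.sum_mul, Finset.mul_sum]
      rw [Finset.sum_comm]
      exact Finset.sum_congr rfl fun p _ => Finset.sum_congr rfl fun t _ => by ring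
    rw [hx, hsum]
    simp only [hterm]
    rw [hbil]
    simp only [hortho]
    simp
  have hlnl1 : l1 ≤ ln := hmono (Fin.le_last _)
  have hlj1 : l1 ≤ lam j := hmono (by simp [Fin.le_def, hj])
  have hljn : lam j ≤ ln := hmono (Fin.le_last _)
  have hμeq : ∀ i, μ i = θ * ((l1 + ln) / 2 - lam i) := by
    intro i
    have hθ' : θ ≠ 0 := ne_of_gt hθ
    simp only [hμ, hτ]
    field_simp
    ring
  have hμℓpos : 0 < μ ℓ := by
    rw [hμeq]
    have : lam ℓ < (l1 + ln) / 2 := by linarith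
    nlinarith
  have hρnn : 0 ≤ ρ := by
    rw [hρ]
    apply div_nonneg
    · linarith
    · linarith
  have hkey : |μ j| ≤ ρ * μ ℓ := by
    have h1 : |μ j| ≤ θ * ((ln - l1) / 2) := by
      rw [hμeq, abs_mul, abs_of_pos hθ]
      have : |(l1 + ln) / 2 - lam j| ≤ (ln - l1) / 2 := by
        rw [abs_le]; constructor <;> linarith
      nlinarith
    have h2 : ρ * μ ℓ = θ * ((ln - l1) / 2) := by
      rw [hρ, hμeq]
      have hden : ln + l1 - 2 * lam ℓ ≠ 0 := ne_of_gt (by linarith)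
      rw [div_mul_eq_mul_div, div_eq_iff hden]
      ring
    exact le_of_le_of_eq h1 h2.symm
  rw [hdot, hdot, abs_mul, abs_mul, abs_pow, abs_pow, abs_of_pos hμℓpos]
  have hαℓ : 0 < |α ℓ| := abs_pos.mpr hα
  have hμℓk : 0 < μ ℓ ^ k := pow_pos hμℓpos k
  have hpow : |μ j| ^ k ≤ ρ ^ k * μ ℓ ^ k := by
    calc |μ j| ^ k ≤ (ρ * μ ℓ) ^ k := pow_le_pow_left₀ (abs_nonneg _) hkey k
    _ = ρ ^ k * μ ℓ ^ k := mul_pow _ _ _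
  rw [div_le_iff₀ (by positivity)]
  calc |α j| * |μ j| ^ k ≤ |α j| * (ρ ^ k * μ ℓ ^ k) := by
        exact mul_le_mul_of_nonneg_left hpow (abs_nonneg _)
    _ = ρ ^ k * (|α j| / |α ℓ|) * (|α ℓ| * μ ℓ ^ k) := by
        field_simp
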